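/- For every integer m ≥ 0 and every complex number z with |z| < log 2, the series ∑_{ℓ ≥ 0} s_{m,ℓ} · z^ℓ / ℓ! converges and its sum equals ((e^z - 1)/(2 - e^z))^{m+1}. -/

import Mathlib

/-- `IsBPA m ℓ f` : `f` encodes a barred preferential arrangement of `[ℓ]` with `m` bars.
Each element of `[ℓ]` is assigned a section (one of the `m + 1` sections determined by the
`m` bars) together with a rank inside its section (ties are allowed: elements of the same
section with the same rank form a block); within each section the set of ranks actually used
must be an initial segment `{0, …, t-1}`, so that `f` determines, for each section, an
ordered partition of the elements assigned to it into nonempty blocks. -/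
def IsBPA (m ℓ : ℕ) (f : Fin ℓ → Fin (m + 1) × Fin ℓ) : Prop :=
  ∀ x : Fin ℓ, ∀ r : Fin ℓ, r < (f x).2 → ∃ y : Fin ℓ, (f y).1 = (f x).1 ∧ (f y).2 = r

instance (m ℓ : ℕ) : DecidablePred (IsBPA m ℓ) := fun f => by unfold IsBPA; infer_instance

/-- `bpa m ℓ` : the number of barred preferential arrangements of `[ℓ]` with `m` bars.
In particular `bpa 0 ℓ` is the number of preferential arrangements of `[ℓ]`
(the Fubini / ordered Bell number `r_ℓ`). -/
def bpa (m ℓ : ℕ) : ℕ :=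
  Fintype.card { f : Fin ℓ → Fin (m + 1) × Fin ℓ // IsBPA m ℓ f }

/-- `IsSBPA m ℓ f` : `f` encodes a *special* barred preferential arrangement, i.e. a barred
preferential arrangement in which every section is nonempty. -/
def IsSBPA (m ℓ : ℕ) (f : Fin ℓ → Fin (m + 1) × Fin ℓ) : Prop :=
  IsBPA m ℓ f ∧ ∀ j : Fin (m + 1), ∃ x : Fin ℓ, (f x).1 = j

instance (m ℓ : ℕ) : DecidablePred (IsSBPA m ℓ) := fun f => by unfold IsSBPA; infer_instance

/-- `sbpa m ℓ` : the number of special barred preferential arrangements of `[ℓ]` with `m` bars. -/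
def sbpa (m ℓ : ℕ) : ℕ :=
  Fintype.card { f : Fin ℓ → Fin (m + 1) × Fin ℓ // IsSBPA m ℓ f }


open Finset

/-- Piece predicate: ranks in each section form an initial segment, every section used. -/
def OkB (m n : ℕ) {α : Type} (f : α → Fin (m + 1) × Fin n) : Prop :=
  (∀ x, ∀ r : ℕ, r < ((f x).2 : ℕ) → ∃ y, (f y).1 = (f x).1 ∧ ((f y).2 : ℕ) = r) ∧
    ∀ j : Fin (m + 1), ∃ x, (f x).1 = j

noncomputable def cnt (m : ℕ) (α : Type) (n : ℕ) : ℕ := Nat.card {f : α → Fin (m + 1) × Fin n // OkB m n f}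

lemma rank_lt_card {α : Type} [Fintype α] (v : α → ℕ) (Q : α → α → Prop)
    (h : ∀ x, ∀ r : ℕ, r < v x → ∃ y, Q x y ∧ v y = r) (x : α) : v x < Fintype.card α := by
  have key : ∀ r : Fin (v x + 1), ∃ y, v y = (r : ℕ) := by
    intro r
    rcases lt_or_eq_of_le (Nat.lt_succ_iff.mp r.isLt) with hr | hr
    · obtain ⟨y, _, hy⟩ := h x r hr; exact ⟨y, hy⟩
    · exact ⟨x, hr.symm⟩
  choose w hw using key
  have hinj : Function.Injective w := by
    intro r1 r2 he
    apply Fin.ext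
    rw [← hw r1, ← hw r2, he]
  have := Fintype.card_le_of_injective w hinj
  simpa using this

lemma OkB.rank_lt {m n : ℕ} {α : Type} [Fintype α] {f : α → Fin (m + 1) × Fin n}
    (hf : OkB m n f) (x : α) : ((f x).2 : ℕ) < Fintype.card α :=
  rank_lt_card (fun x => ((f x).2 : ℕ)) (fun x y => (f y).1 = (f x).1) hf.1 x

lemma OkB.comp_equiv {m n : ℕ} {α β : Type} (e : α ≃ β) {f : β → Fin (m + 1) × Fin n}
    (h : OkB m n f) : OkB m n (f ∘ e) := by
  constructor
  · intro x r hr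
    obtain ⟨y, h1, h2⟩ := h.1 (e x) r hr
    exact ⟨e.symm y, by simpa using h1, by simpa using h2⟩
  · intro j
    obtain ⟨y, hy⟩ := h.2 j
    exact ⟨e.symm y, by simpa using hy⟩

lemma cnt_congr {m n : ℕ} {α β : Type} (e : α ≃ β) : cnt m α n = cnt m β n :=
  Nat.card_congr
    { toFun := fun p => ⟨p.1 ∘ e.symm, p.2.comp_equiv e.symm⟩
      invFun := fun p => ⟨p.1 ∘ e, p.2.comp_equiv e⟩
      left_inv := fun p => Subtype.ext (by funext x; simp)
      right_inv := fun p => Subtype.ext (by funext x; simp) }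

lemma OkB.of_eq {m n n' : ℕ} {α : Type} {f : α → Fin (m + 1) × Fin n}
    {g : α → Fin (m + 1) × Fin n'} (h1 : ∀ x, (g x).1 = (f x).1)
    (h2 : ∀ x, ((g x).2 : ℕ) = ((f x).2 : ℕ)) (hf : OkB m n f) : OkB m n' g := by
  constructor
  · intro x r hr
    obtain ⟨y, a, b⟩ := hf.1 x r (by rw [← h2 x]; exact hr)
    exact ⟨y, by rw [h1 y, h1 x]; exact a, by rw [h2 y]; exact b⟩
  · intro j
    obtain ⟨x, hx⟩ := hf.2 j
    exact ⟨x, (h1 x).trans hx⟩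

lemma cnt_rank {m : ℕ} {α : Type} [Fintype α] {n n' : ℕ} (h : Fintype.card α ≤ n)
    (h' : n ≤ n') : cnt m α n = cnt m α n' := by
  refine Nat.card_congr ?_
  refine
    { toFun := fun p => ⟨fun x => ((p.1 x).1, Fin.castLE h' (p.1 x).2),
        p.2.of_eq (fun x => rfl) (fun x => rfl)⟩
      invFun := fun p => ⟨fun x => ((p.1 x).1, ⟨((p.1 x).2 : ℕ), lt_of_lt_of_le (p.2.rank_lt x) h⟩),
        p.2.of_eq (fun x => rfl) (fun x => rfl)⟩
      left_inv := fun p => Subtype.ext (by funext x; exact Prod.ext rfl (Fin.ext rfl))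
      right_inv := fun p => Subtype.ext (by funext x; exact Prod.ext rfl (Fin.ext rfl)) }

lemma cnt_eq_sbpa (m ℓ : ℕ) : cnt m (Fin ℓ) ℓ = sbpa m ℓ := by
  rw [sbpa, ← Nat.card_eq_fintype_card]
  refine Nat.card_congr (Equiv.subtypeEquivRight fun f => ?_)
  simp only [IsSBPA, IsBPA, OkB]
  constructor
  · rintro ⟨h1, h2⟩
    refine ⟨fun x r hr => ?_, h2⟩
    obtain ⟨y, a, b⟩ := h1 x (r : ℕ) hr
    exact ⟨y, a, Fin.ext b⟩
  · rintro ⟨h1, h2⟩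
    refine ⟨fun x r hr => ?_, h2⟩
    have hrℓ : r < ℓ := lt_trans hr (f x).2.isLt
    obtain ⟨y, a, b⟩ := h1 x ⟨r, hrℓ⟩ (by simpa [Fin.lt_def] using hr)
    exact ⟨y, a, congrArg Fin.val b⟩

lemma card_part {γ β : Type} [Fintype γ] [DecidableEq β] (c : γ → β) (t : Finset β)
    (h : ∀ x, c x ∈ t) : Nat.card γ = ∑ b ∈ t, Nat.card {x : γ // c x = b} := by
  classical
  rw [Nat.card_eq_fintype_card, ← Finset.card_univ,
    Finset.card_eq_sum_card_fiberwise (fun x _ => h x)]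
  refine Finset.sum_congr rfl fun b _ => ?_
  rw [Nat.card_eq_fintype_card, Fintype.card_subtype]

def splitEquiv (m n : ℕ) (α : Type) [Fintype α] [DecidableEq α] (S : Finset α) :
    {f : α → Fin (m + 2) × Fin n //
        OkB (m + 1) n f ∧ ∀ x, (f x).1 = Fin.last (m + 1) ↔ x ∉ S} ≃
      {g : ↥S → Fin (m + 1) × Fin n // OkB m n g} ×
        {h : ↥(Sᶜ) → Fin 1 × Fin n // OkB 0 n h} where
  toFun p := by
    obtain ⟨f, hf, hS⟩ := p
    have hne : ∀ x : ↥S, (f x.1).1 ≠ Fin.last (m + 1) := fun x he => (hS x.1).mp he x.2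
    refine ⟨⟨fun x => ((f x.1).1.castPred (hne x), (f x.1).2), ?_, ?_⟩,
      ⟨fun x => ((0 : Fin 1), (f x.1).2), ?_, ?_⟩⟩
    · intro x r hr
      obtain ⟨y, a, b⟩ := hf.1 x.1 r hr
      have hy : y ∈ S := by
        by_contra hy
        exact hne x (a ▸ (hS y).mpr hy)
      refine ⟨⟨y, hy⟩, Fin.ext ?_, b⟩
      simp only [Fin.coe_castPred]
      exact congrArg Fin.val a
    · intro j
      obtain ⟨y, hy⟩ := hf.2 j.castSucc
      have hy' : y ∈ S := by
        by_contra hc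
        rw [(hS y).mpr hc] at hy
        exact (Fin.castSucc_lt_last j).ne' hy
      refine ⟨⟨y, hy'⟩, Fin.ext ?_⟩
      simp only [Fin.coe_castPred]
      exact congrArg Fin.val hy
    · intro x r hr
      obtain ⟨y, a, b⟩ := hf.1 x.1 r hr
      have hx : (f x.1).1 = Fin.last _ := (hS x.1).mpr (Finset.mem_compl.mp x.2)
      have hy : y ∉ S := (hS y).mp (a.trans hx)
      exact ⟨⟨y, Finset.mem_compl.mpr hy⟩, rfl, b⟩
    · intro j
      obtain ⟨y, hy⟩ := hf.2 (Fin.last (m + 1))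
      exact ⟨⟨y, Finset.mem_compl.mpr ((hS y).mp hy)⟩, Subsingleton.elim (α := Fin 1) _ _⟩
  invFun q := by
    obtain ⟨⟨g, hg⟩, ⟨h, hh⟩⟩ := q
    refine ⟨fun x => if hx : x ∈ S then ((g ⟨x, hx⟩).1.castSucc, (g ⟨x, hx⟩).2)
        else (Fin.last (m + 1), (h ⟨x, Finset.mem_compl.mpr hx⟩).2), ⟨?_, ?_⟩, ?_⟩
    · intro x r hr
      by_cases hx : x ∈ S
      · simp only [dif_pos hx] at hr ⊢
        obtain ⟨y, a, b⟩ := hg.1 ⟨x, hx⟩ r hr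
        refine ⟨y.1, ?_, ?_⟩
        · simp only [dif_pos y.2, Subtype.coe_eta]
          exact congrArg Fin.castSucc a
        · simp only [dif_pos y.2, Subtype.coe_eta]
          exact b
      · simp only [dif_neg hx] at hr ⊢
        obtain ⟨y, a, b⟩ := hh.1 ⟨x, Finset.mem_compl.mpr hx⟩ r hr
        have hy : y.1 ∉ S := Finset.mem_compl.mp y.2
        refine ⟨y.1, ?_, ?_⟩
        · simp only [dif_neg hy, Subtype.coe_eta]
        · simp only [dif_neg hy, Subtype.coe_eta]
          exact b
    · intro j
      rcases eq_or_ne j (Fin.last (m + 1)) with hj | hj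
      · obtain ⟨x, hx⟩ := hh.2 0
        have hx' : x.1 ∉ S := Finset.mem_compl.mp x.2
        exact ⟨x.1, by simp only [dif_neg hx']; exact hj.symm⟩
      · obtain ⟨x, hx⟩ := hg.2 (j.castPred hj)
        refine ⟨x.1, ?_⟩
        simp only [dif_pos x.2, Subtype.coe_eta]
        rw [hx, Fin.castSucc_castPred]
    · intro x
      by_cases hx : x ∈ S
      · simp only [dif_pos hx]
        constructor
        · intro he
          exact absurd he (Fin.castSucc_lt_last _).ne
        · intro hc; exact absurd hx hc
      · simp [dif_neg hx, hx]
  left_inv p := by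
    obtain ⟨f, hf, hS⟩ := p
    apply Subtype.ext
    funext x
    by_cases hx : x ∈ S
    · simp only [dif_pos hx]
      exact Prod.ext (Fin.castSucc_castPred _ _) rfl
    · simp only [dif_neg hx]
      exact Prod.ext ((hS x).mpr hx).symm rfl
  right_inv q := by
    obtain ⟨⟨g, hg⟩, ⟨h, hh⟩⟩ := q
    refine Prod.ext ?_ ?_
    · apply Subtype.ext
      funext x
      refine Prod.ext ?_ ?_
      · apply Fin.ext
        simp only [Fin.coe_castPred, dif_pos x.2, Subtype.coe_eta]
        rfl
      · simp only [dif_pos x.2, Subtype.coe_eta]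
    · apply Subtype.ext
      funext x
      have hx : x.1 ∉ S := Finset.mem_compl.mp x.2
      refine Prod.ext (Subsingleton.elim (α := Fin 1) _ _) ?_
      simp only [dif_neg hx, Subtype.coe_eta]

lemma cnt_split (m n : ℕ) (α : Type) [Fintype α] [DecidableEq α] :
    cnt (m + 1) α n = ∑ S : Finset α, cnt m ↥S n * cnt 0 ↥(Sᶜ) n := by
  classical
  haveI : Fintype {f : α → Fin (m + 2) × Fin n // OkB (m + 1) n f} := Fintype.ofFinite _
  rw [cnt, card_part (fun p : {f : α → Fin (m + 2) × Fin n // OkB (m + 1) n f} =>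
    univ.filter fun x => (p.1 x).1 ≠ Fin.last (m + 1)) univ (fun _ => mem_univ _)]
  refine Finset.sum_congr rfl fun S _ => ?_
  rw [cnt, cnt, ← Nat.card_prod]
  refine Nat.card_congr ?_
  refine Equiv.trans (Equiv.trans
    (Equiv.subtypeSubtypeEquivSubtypeInter (OkB (m + 1) n)
      (fun f : α → Fin (m + 2) × Fin n => univ.filter (fun x => (f x).1 ≠ Fin.last (m + 1)) = S))
    (Equiv.subtypeEquivRight fun f => ?_)) (splitEquiv m n α S)
  constructor
  · rintro ⟨h1, h2⟩
    refine ⟨h1, fun x => ?_⟩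
    rw [Finset.ext_iff] at h2
    have := h2 x
    simp only [Finset.mem_filter, Finset.mem_univ, true_and] at this
    constructor
    · intro he hxS
      exact (this.mpr hxS) he
    · intro hxS
      by_contra hne
      exact hxS (this.mp hne)
  · rintro ⟨h1, h2⟩
    refine ⟨h1, ?_⟩
    ext x
    simp only [Finset.mem_filter, Finset.mem_univ, true_and]
    constructor
    · intro hne
      by_contra hxS
      exact hne ((h2 x).mpr hxS)
    · intro hxS he
      exact (h2 x).mp he hxS

lemma cnt_sub_eq (m ℓ : ℕ) (S : Finset (Fin ℓ)) : cnt m ↥S ℓ = sbpa m S.card := by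
  have h1 : cnt m ↥S ℓ = cnt m (Fin S.card) ℓ := cnt_congr S.equivFin
  have h2 : cnt m (Fin S.card) S.card = cnt m (Fin S.card) ℓ :=
    cnt_rank (le_of_eq (Fintype.card_fin _)) (S.card_le_univ.trans (le_of_eq (Fintype.card_fin ℓ)))
  rw [h1, ← h2, cnt_eq_sbpa]

lemma sbpa_rec (m ℓ : ℕ) :
    sbpa (m + 1) ℓ = ∑ k ∈ range (ℓ + 1), ℓ.choose k * (sbpa m k * sbpa 0 (ℓ - k)) := by
  classical
  have h0 : sbpa (m + 1) ℓ = ∑ S : Finset (Fin ℓ), sbpa m S.card * sbpa 0 (ℓ - S.card) := by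
    rw [← cnt_eq_sbpa, cnt_split]
    refine Finset.sum_congr rfl fun S _ => ?_
    rw [cnt_sub_eq, cnt_sub_eq]
    congr 2
    rw [Finset.card_compl, Fintype.card_fin]
  rw [h0]
  have h1 : ∑ S : Finset (Fin ℓ), sbpa m S.card * sbpa 0 (ℓ - S.card)
      = ∑ S ∈ (univ : Finset (Fin ℓ)).powerset, sbpa m S.card * sbpa 0 (ℓ - S.card) := by
    rw [Finset.powerset_univ]
  rw [h1, Finset.sum_powerset_apply_card (fun k => sbpa m k * sbpa 0 (ℓ - k))]
  simp [Finset.card_univ, smul_eq_mul]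


def OkPA (n : ℕ) {α : Type} (f : α → Fin n) : Prop :=
  ∀ x, ∀ r : ℕ, r < (f x : ℕ) → ∃ y, (f y : ℕ) = r

noncomputable def pa (α : Type) (n : ℕ) : ℕ := Nat.card {f : α → Fin n // OkPA n f}

lemma rank_lt_card' {α : Type} [Fintype α] (v : α → ℕ) (Q : α → α → Prop)
    (h : ∀ x, ∀ r : ℕ, r < v x → ∃ y, Q x y ∧ v y = r) (x : α) : v x < Fintype.card α := by
  have key : ∀ r : Fin (v x + 1), ∃ y, v y = (r : ℕ) := by
    intro r
    rcases lt_or_eq_of_le (Nat.lt_succ_iff.mp r.isLt) with hr | hr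
    · obtain ⟨y, _, hy⟩ := h x r hr; exact ⟨y, hy⟩
    · exact ⟨x, hr.symm⟩
  choose w hw using key
  have hinj : Function.Injective w := by
    intro r1 r2 he
    apply Fin.ext
    rw [← hw r1, ← hw r2, he]
  have := Fintype.card_le_of_injective w hinj
  simpa using this

lemma OkPA.rank_lt {n : ℕ} {α : Type} [Fintype α] {f : α → Fin n} (hf : OkPA n f) (x : α) :
    ((f x) : ℕ) < Fintype.card α :=
  rank_lt_card' (fun x => ((f x) : ℕ)) (fun _ _ => True)
    (fun x r hr => by obtain ⟨y, hy⟩ := hf x r hr; exact ⟨y, trivial, hy⟩) x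

lemma OkPA.comp_equiv {n : ℕ} {α β : Type} (e : α ≃ β) {f : β → Fin n} (h : OkPA n f) :
    OkPA n (f ∘ e) := by
  intro x r hr
  obtain ⟨y, hy⟩ := h (e x) r hr
  exact ⟨e.symm y, by simpa using hy⟩

lemma pa_congr {n : ℕ} {α β : Type} (e : α ≃ β) : pa α n = pa β n :=
  Nat.card_congr
    { toFun := fun p => ⟨p.1 ∘ e.symm, p.2.comp_equiv e.symm⟩
      invFun := fun p => ⟨p.1 ∘ e, p.2.comp_equiv e⟩
      left_inv := fun p => Subtype.ext (by funext x; simp)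
      right_inv := fun p => Subtype.ext (by funext x; simp) }

lemma OkPA.of_eq {n n' : ℕ} {α : Type} {f : α → Fin n} {g : α → Fin n'}
    (h2 : ∀ x, ((g x) : ℕ) = ((f x) : ℕ)) (hf : OkPA n f) : OkPA n' g := by
  intro x r hr
  obtain ⟨y, b⟩ := hf x r (by rw [← h2 x]; exact hr)
  exact ⟨y, by rw [h2 y]; exact b⟩

lemma pa_rank {α : Type} [Fintype α] {n n' : ℕ} (h : Fintype.card α ≤ n) (h' : n ≤ n') :
    pa α n = pa α n' := by
  refine Nat.card_congr ?_
  refine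
    { toFun := fun p => ⟨fun x => Fin.castLE h' (p.1 x), p.2.of_eq (fun x => rfl)⟩
      invFun := fun p => ⟨fun x => ⟨((p.1 x) : ℕ), lt_of_lt_of_le (p.2.rank_lt x) h⟩,
        p.2.of_eq (fun x => rfl)⟩
      left_inv := fun p => Subtype.ext (by funext x; exact Fin.ext rfl)
      right_inv := fun p => Subtype.ext (by funext x; exact Fin.ext rfl) }

noncomputable def fub (ℓ : ℕ) : ℕ := pa (Fin ℓ) ℓ

lemma fub_zero : fub 0 = 1 := by
  rw [fub, pa]
  haveI : Unique {f : Fin 0 → Fin 0 // OkPA 0 f} :=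
    { default := ⟨fun x => x.elim0, fun x => x.elim0⟩
      uniq := fun p => Subtype.ext (by funext x; exact x.elim0) }
  exact Nat.card_unique

/-- The splitting equivalence for preferential arrangements: peel off the first block. -/
def paSplitEquiv (α : Type) [Fintype α] [DecidableEq α] (S : Finset α) (hS : S.Nonempty)
    {n : ℕ} (hn : Fintype.card α ≤ n) :
    {f : α → Fin n // OkPA n f ∧ ∀ x, (f x : ℕ) = 0 ↔ x ∈ S} ≃
      {g : ↥(Sᶜ) → Fin n // OkPA n g} where
  toFun p := ⟨fun x => ⟨(p.1 x.1 : ℕ) - 1, lt_of_le_of_lt (Nat.sub_le _ _) (p.1 x.1).isLt⟩, by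
    intro x r hr
    simp only at hr
    have hx0 : (p.1 x.1 : ℕ) ≠ 0 := fun h0 => (Finset.mem_compl.mp x.2) ((p.2.2 x.1).mp h0)
    obtain ⟨y, hy⟩ := p.2.1 x.1 (r + 1) (by omega)
    have hy0 : y ∉ S := fun hyS => by
      have := (p.2.2 y).mpr hyS
      omega
    exact ⟨⟨y, Finset.mem_compl.mpr hy0⟩, by simp [hy]⟩⟩
  invFun q :=
    have npos : 0 < n := lt_of_lt_of_le ((Finset.card_pos.mpr hS).trans_le S.card_le_univ) hn
    have bound : ∀ x : ↥(Sᶜ), ((q.1 x) : ℕ) + 1 < n := by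
      intro x
      have h1 := q.2.rank_lt x
      rw [Fintype.card_coe, Finset.card_compl] at h1
      have h2 : 1 ≤ S.card := Finset.card_pos.mpr hS
      have h3 : S.card ≤ Fintype.card α := S.card_le_univ
      omega
    ⟨fun x => if hx : x ∈ S then ⟨0, npos⟩
      else ⟨(q.1 ⟨x, Finset.mem_compl.mpr hx⟩ : ℕ) + 1, bound _⟩, by
    refine ⟨?_, ?_⟩
    · intro x r hr
      by_cases hx : x ∈ S
      · simp only [dif_pos hx] at hr
        omega
      · simp only [dif_neg hx] at hr
        rcases Nat.eq_zero_or_pos r with hr0 | hrpos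
        · obtain ⟨y0, hy0⟩ := hS
          exact ⟨y0, by simp [dif_pos hy0, hr0]⟩
        · obtain ⟨y, hy⟩ := q.2 ⟨x, Finset.mem_compl.mpr hx⟩ (r - 1) (by omega)
          have hy' : y.1 ∉ S := Finset.mem_compl.mp y.2
          refine ⟨y.1, ?_⟩
          simp only [dif_neg hy', Subtype.coe_eta]
          omega
    · intro x
      by_cases hx : x ∈ S
      · simp [dif_pos hx, hx]
      · simp [dif_neg hx, hx]⟩
  left_inv p := by
    obtain ⟨f, hf, hiff⟩ := p
    apply Subtype.ext
    funext x
    by_cases hx : x ∈ S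
    · simp only [dif_pos hx]
      exact Fin.ext (((hiff x).mpr hx).symm)
    · simp only [dif_neg hx]
      apply Fin.ext
      have : (f x : ℕ) ≠ 0 := fun h0 => hx ((hiff x).mp h0)
      simp only [Fin.val_mk]
      omega
  right_inv q := by
    apply Subtype.ext
    funext x
    have hx : x.1 ∉ S := Finset.mem_compl.mp x.2
    apply Fin.ext
    simp only [dif_neg hx, Subtype.coe_eta, Fin.val_mk]
    omega


lemma card_part' {γ β : Type} [Fintype γ] [DecidableEq β] (c : γ → β) (t : Finset β)
    (h : ∀ x, c x ∈ t) : Nat.card γ = ∑ b ∈ t, Nat.card {x : γ // c x = b} := by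
  classical
  rw [Nat.card_eq_fintype_card, ← Finset.card_univ,
    Finset.card_eq_sum_card_fiberwise (fun x _ => h x)]
  refine Finset.sum_congr rfl fun b _ => ?_
  rw [Nat.card_eq_fintype_card, Fintype.card_subtype]

lemma pa_split (α : Type) [Fintype α] [DecidableEq α] [Nonempty α] {n : ℕ}
    (hn : Fintype.card α ≤ n) :
    pa α n = ∑ S ∈ univ.filter (fun S : Finset α => S.Nonempty), pa ↥(Sᶜ) n := by
  classical
  haveI : Fintype {f : α → Fin n // OkPA n f} := Fintype.ofFinite _
  have npos : 0 < n := lt_of_lt_of_le Fintype.card_pos hn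
  have hmem : ∀ p : {f : α → Fin n // OkPA n f},
      (univ.filter fun x => (p.1 x : ℕ) = 0) ∈ univ.filter (fun S : Finset α => S.Nonempty) := by
    intro p
    simp only [Finset.mem_filter, Finset.mem_univ, true_and]
    obtain ⟨x0⟩ := ‹Nonempty α›
    rcases Nat.eq_zero_or_pos (p.1 x0 : ℕ) with h0 | h0
    · exact ⟨x0, by simp [h0]⟩
    · obtain ⟨y, hy⟩ := p.2 x0 0 h0
      exact ⟨y, by simp [hy]⟩
  rw [pa, card_part' (fun p : {f : α → Fin n // OkPA n f} =>
    univ.filter fun x => (p.1 x : ℕ) = 0) _ hmem]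
  refine Finset.sum_congr rfl fun S hSmem => ?_
  have hS : S.Nonempty := by simpa using hSmem
  rw [pa]
  refine Nat.card_congr ?_
  refine Equiv.trans (Equiv.trans
    (Equiv.subtypeSubtypeEquivSubtypeInter (OkPA n)
      (fun f : α → Fin n => univ.filter (fun x => (f x : ℕ) = 0) = S))
    (Equiv.subtypeEquivRight fun f => ?_)) (paSplitEquiv α S hS hn)
  constructor
  · rintro ⟨h1, h2⟩
    refine ⟨h1, fun x => ?_⟩
    rw [Finset.ext_iff] at h2
    have := h2 x
    simp only [Finset.mem_filter, Finset.mem_univ, true_and] at this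
    exact this
  · rintro ⟨h1, h2⟩
    refine ⟨h1, ?_⟩
    ext x
    simp only [Finset.mem_filter, Finset.mem_univ, true_and]
    exact h2 x

lemma pa_sub_eq (ℓ : ℕ) (S : Finset (Fin ℓ)) : pa ↥S ℓ = fub S.card := by
  have h1 : pa ↥S ℓ = pa (Fin S.card) ℓ := pa_congr S.equivFin
  have h2 : pa (Fin S.card) S.card = pa (Fin S.card) ℓ :=
    pa_rank (le_of_eq (Fintype.card_fin _)) (S.card_le_univ.trans (le_of_eq (Fintype.card_fin ℓ)))
  rw [h1, ← h2]; rfl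

/-- Recurrence for Fubini numbers: peel off the first block. -/
lemma fub_rec (ℓ : ℕ) (hℓ : 1 ≤ ℓ) :
    fub ℓ = ∑ S ∈ univ.filter (fun S : Finset (Fin ℓ) => S.Nonempty), fub (ℓ - S.card) := by
  classical
  haveI : Nonempty (Fin ℓ) := ⟨⟨0, hℓ⟩⟩
  rw [fub, pa_split (Fin ℓ) (le_of_eq (Fintype.card_fin ℓ))]
  refine Finset.sum_congr rfl fun S _ => ?_
  rw [pa_sub_eq ℓ Sᶜ, Finset.card_compl, Fintype.card_fin]

/-- Key binomial identity for Fubini numbers. -/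
lemma fub_key (n : ℕ) :
    (∑ k ∈ range (n + 1), n.choose k * fub (n - k)) + (if n = 0 then 1 else 0) = 2 * fub n := by
  rcases Nat.eq_zero_or_pos n with hn | hn
  · subst hn; simp [fub_zero]
  · simp only [if_neg (Nat.pos_iff_ne_zero.mp hn)]
    have hsum : ∑ S : Finset (Fin n), fub (n - S.card)
        = ∑ k ∈ range (n + 1), n.choose k * fub (n - k) := by
      rw [show (univ : Finset (Finset (Fin n))) = (univ : Finset (Fin n)).powerset by
        rw [Finset.powerset_univ]]
      rw [Finset.sum_powerset_apply_card (fun k => fub (n - k))]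
      simp [Finset.card_univ, smul_eq_mul]
    rw [← hsum, add_zero]
    have hsplit : ∑ S : Finset (Fin n), fub (n - S.card)
        = (∑ S ∈ univ.filter (fun S : Finset (Fin n) => S.Nonempty), fub (n - S.card))
          + ∑ S ∈ univ.filter (fun S : Finset (Fin n) => ¬S.Nonempty), fub (n - S.card) :=
      (Finset.sum_filter_add_sum_filter_not _ _ _).symm
    have hempty : ∑ S ∈ univ.filter (fun S : Finset (Fin n) => ¬S.Nonempty), fub (n - S.card)
        = fub n := by
      have : univ.filter (fun S : Finset (Fin n) => ¬S.Nonempty) = {∅} := by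
        ext S
        simp [Finset.not_nonempty_iff_eq_empty]
      rw [this, Finset.sum_singleton]
      simp
    rw [hsplit, hempty, ← fub_rec n hn, two_mul]


lemma cnt0_eq_pa (α : Type) [Nonempty α] (n : ℕ) : cnt 0 α n = pa α n := by
  refine Nat.card_congr ?_
  refine
    { toFun := fun p => ⟨fun x => (p.1 x).2, ?_⟩
      invFun := fun p => ⟨fun x => ((0 : Fin 1), p.1 x), ?_, ?_⟩
      left_inv := ?_
      right_inv := ?_ }
  · intro x r hr
    obtain ⟨y, _, b⟩ := p.2.1 x r hr
    exact ⟨y, b⟩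
  · intro x r hr
    obtain ⟨y, hy⟩ := p.2 x r hr
    exact ⟨y, rfl, hy⟩
  · intro j
    exact ⟨Classical.arbitrary α, Subsingleton.elim (α := Fin 1) _ _⟩
  · intro p
    apply Subtype.ext
    funext x
    exact Prod.ext (Subsingleton.elim (α := Fin 1) _ _) rfl
  · intro p
    apply Subtype.ext
    funext x
    rfl

lemma sbpa_zero_eq_fub (ℓ : ℕ) (hℓ : 1 ≤ ℓ) : sbpa 0 ℓ = fub ℓ := by
  haveI : Nonempty (Fin ℓ) := ⟨⟨0, hℓ⟩⟩
  rw [← cnt_eq_sbpa, cnt0_eq_pa, fub]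

lemma sbpa_zero_right (m : ℕ) : sbpa m 0 = 0 := by
  rw [sbpa]
  haveI : IsEmpty {f : Fin 0 → Fin (m + 1) × Fin 0 // IsSBPA m 0 f} := by
    refine ⟨fun p => ?_⟩
    obtain ⟨x, -⟩ := p.2.2 0
    exact x.elim0
  exact Fintype.card_eq_zero

/-- The relation coefficients `b ℓ = sbpa 0 ℓ + [ℓ = 0]`. -/
lemma fub_eq_sbpa_zero (ℓ : ℕ) : (fub ℓ : ℤ) = sbpa 0 ℓ + (if ℓ = 0 then 1 else 0) := by
  rcases Nat.eq_zero_or_pos ℓ with h | h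
  · subst h; simp [fub_zero, sbpa_zero_right]
  · simp [sbpa_zero_eq_fub ℓ h, Nat.pos_iff_ne_zero.mp h]

lemma conv_coeff (z : ℂ) (u v : ℕ → ℂ) (n : ℕ) :
    ∑ k ∈ range (n + 1), (u k * z ^ k / (k.factorial : ℂ)) * (v (n - k) * z ^ (n - k) / ((n-k).factorial : ℂ)) =
      (∑ k ∈ range (n + 1), (n.choose k : ℂ) * u k * v (n - k)) * z ^ n / (n.factorial : ℂ) := by
  rw [Finset.sum_mul, Finset.sum_div]
  refine Finset.sum_congr rfl fun k hk => ?_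
  have hkn : k ≤ n := Nat.lt_succ_iff.mp (Finset.mem_range.mp hk)
  rw [Nat.cast_choose ℂ hkn]
  have h1 : ((k.factorial : ℂ): ℂ) ≠ 0 := Nat.cast_ne_zero.mpr (Nat.factorial_ne_zero _)
  have h2 : ((n-k).factorial : ℂ) ≠ 0 := Nat.cast_ne_zero.mpr (Nat.factorial_ne_zero _)
  have h3 : ((n.factorial : ℂ) : ℂ) ≠ 0 := Nat.cast_ne_zero.mpr (Nat.factorial_ne_zero _)
  have hzz : z ^ k * z ^ (n - k) = z ^ n := by
    rw [← pow_add, Nat.add_sub_cancel' hkn]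
  field_simp
  rw [← hzz]
  ring

lemma exp_hasSum (z : ℂ) : HasSum (fun n : ℕ => z ^ n / (n.factorial : ℂ)) (Complex.exp z) := by
  rw [Complex.exp_eq_exp_ℂ]
  exact NormedSpace.expSeries_div_hasSum_exp z

lemma exp_norm_summable (z : ℂ) : Summable fun n : ℕ => ‖z ^ n / (n.factorial : ℂ)‖ := by
  have := Real.summable_pow_div_factorial ‖z‖
  refine this.congr fun n => ?_
  rw [norm_div, norm_pow, Complex.norm_natCast]

lemma fub_rec' (n : ℕ) (hn : 1 ≤ n) :
    fub n = ∑ i ∈ range n, n.choose (i + 1) * fub (n - (i + 1)) := by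
  have h := fub_key n
  rw [if_neg (by omega)] at h
  rw [Finset.sum_range_succ'] at h
  simp only [Nat.choose_zero_right, Nat.sub_zero, one_mul, add_zero] at h
  omega

lemma fub_bound : ∀ n : ℕ, (fub n : ℝ) ≤ (n.factorial : ℝ) * ((Real.log 2)⁻¹) ^ n := by
  intro n
  induction n using Nat.strong_induction_on with
  | _ n IH =>
    rcases Nat.eq_zero_or_pos n with hn | hn
    · subst hn; simp [fub_zero]
    have hd : (0 : ℝ) < Real.log 2 := Real.log_pos one_lt_two
    set c : ℝ := (Real.log 2)⁻¹ with hc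
    have hcpos : 0 < c := inv_pos.mpr hd
    have hstep : (fub n : ℝ) = ∑ i ∈ range n, (n.choose (i + 1) : ℝ) * (fub (n - (i + 1)) : ℝ) := by
      rw [fub_rec' n hn]
      push_cast
      rfl
    have hterm : ∀ i ∈ range n,
        (n.choose (i + 1) : ℝ) * (fub (n - (i + 1)) : ℝ) ≤
          (n.factorial : ℝ) * c ^ n * (Real.log 2 ^ (i + 1) / (i + 1).factorial) := by
      intro i hi
      have hin : i + 1 ≤ n := Finset.mem_range.mp hi
      have hIH := IH (n - (i + 1)) (by omega)
      have h1 : (n.choose (i + 1) : ℝ) * (fub (n - (i + 1)) : ℝ) ≤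
          (n.choose (i + 1) : ℝ) * ((n - (i + 1)).factorial * c ^ (n - (i + 1))) :=
        mul_le_mul_of_nonneg_left hIH (by positivity)
      refine h1.trans (le_of_eq ?_)
      rw [Nat.cast_choose ℝ hin]
      have hf1 : ((i + 1).factorial : ℝ) ≠ 0 := Nat.cast_ne_zero.mpr (Nat.factorial_ne_zero _)
      have hf2 : ((n - (i + 1)).factorial : ℝ) ≠ 0 := Nat.cast_ne_zero.mpr (Nat.factorial_ne_zero _)
      have hck : c ^ (n - (i + 1)) = c ^ n * Real.log 2 ^ (i + 1) := by
        have h2 : c ^ (n - (i + 1)) * c ^ (i + 1) = c ^ n := by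
          rw [← pow_add, Nat.sub_add_cancel hin]
        have h3 : c ^ (i + 1) * Real.log 2 ^ (i + 1) = 1 := by
          rw [← mul_pow, hc, inv_mul_cancel₀ hd.ne', one_pow]
        calc c ^ (n - (i + 1)) = c ^ (n - (i + 1)) * (c ^ (i + 1) * Real.log 2 ^ (i + 1)) := by
              rw [h3, mul_one]
          _ = (c ^ (n - (i + 1)) * c ^ (i + 1)) * Real.log 2 ^ (i + 1) := by ring
          _ = c ^ n * Real.log 2 ^ (i + 1) := by rw [h2]
      rw [hck]
      field_simp
    have hsum2 : ∑ i ∈ range n, (Real.log 2 ^ (i + 1) / ((i + 1).factorial : ℝ)) ≤ 1 := by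
      have h := Real.sum_le_exp_of_nonneg hd.le (n + 1)
      rw [Finset.sum_range_succ'] at h
      simp only [pow_zero, Nat.factorial_zero, Nat.cast_one, div_one] at h
      have : Real.exp (Real.log 2) = 2 := Real.exp_log two_pos
      linarith
    calc (fub n : ℝ) ≤ ∑ i ∈ range n,
          (n.factorial : ℝ) * c ^ n * (Real.log 2 ^ (i + 1) / (i + 1).factorial) := by
          rw [hstep]; exact Finset.sum_le_sum hterm
      _ = (n.factorial : ℝ) * c ^ n *
          ∑ i ∈ range n, (Real.log 2 ^ (i + 1) / ((i + 1).factorial : ℝ)) := by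
          rw [Finset.mul_sum]
      _ ≤ (n.factorial : ℝ) * c ^ n * 1 := by
          refine mul_le_mul_of_nonneg_left hsum2 (by positivity)
      _ = (n.factorial : ℝ) * c ^ n := mul_one _

/-- For every `m ≥ 0` and every complex `z` with `|z| < log 2`, the series
`∑_{ℓ ≥ 0} s_{m,ℓ} · z^ℓ / ℓ!` converges, with sum `((e^z - 1)/(2 - e^z))^{m+1}`. -/
theorem sbpa_egf (m : ℕ) (z : ℂ) (hz : ‖z‖ < Real.log 2) :
    HasSum (fun ℓ : ℕ => (sbpa m ℓ : ℂ) * z ^ ℓ / (Nat.factorial ℓ : ℂ))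
      (((Complex.exp z - 1) / (2 - Complex.exp z)) ^ (m + 1)) := by
  have hd : (0 : ℝ) < Real.log 2 := Real.log_pos one_lt_two
  have hznorm : ‖z‖ < Real.log 2 := hz
  -- the series of Fubini numbers
  set G : ℕ → ℂ := fun ℓ => (fub ℓ : ℂ) * z ^ ℓ / (ℓ.factorial : ℂ) with hGdef
  have hGnorm : Summable fun ℓ => ‖G ℓ‖ := by
    have hq : ‖z‖ / Real.log 2 < 1 := (div_lt_one hd).mpr hznorm
    have hq0 : (0 : ℝ) ≤ ‖z‖ / Real.log 2 := by positivity
    refine Summable.of_nonneg_of_le (fun ℓ => norm_nonneg _) (fun ℓ => ?_)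
      (summable_geometric_of_lt_one hq0 hq)
    have h1 : ‖G ℓ‖ = (fub ℓ : ℝ) * ‖z‖ ^ ℓ / (ℓ.factorial : ℝ) := by
      simp [hGdef, norm_div, norm_mul, norm_pow]
    rw [h1]
    have hb := fub_bound ℓ
    have hfacpos : (0 : ℝ) < (ℓ.factorial : ℝ) := by positivity
    calc (fub ℓ : ℝ) * ‖z‖ ^ ℓ / (ℓ.factorial : ℝ)
        ≤ ((ℓ.factorial : ℝ) * ((Real.log 2)⁻¹) ^ ℓ) * ‖z‖ ^ ℓ / (ℓ.factorial : ℝ) := by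
          gcongr
      _ = (‖z‖ / Real.log 2) ^ ℓ := by
          field_simp [div_pow]
          ring
  have hG : HasSum G (∑' ℓ, G ℓ) := hGnorm.of_norm.hasSum
  set U : ℂ := ∑' ℓ, G ℓ with hUdef
  -- Cauchy product with the exponential series
  have hEG := hasSum_sum_range_mul_of_summable_norm (exp_norm_summable z) hGnorm
  rw [(exp_hasSum z).tsum_eq] at hEG
  have hcoeff : ∀ n : ℕ, (∑ k ∈ range (n + 1),
      (z ^ k / (k.factorial : ℂ)) * G (n - k)) = 2 * G n - (if n = 0 then 1 else 0) := by
    intro n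
    have h1 : ∀ k, z ^ k / (k.factorial : ℂ) = (1 : ℂ) * z ^ k / (k.factorial : ℂ) := by
      intro k; rw [one_mul]
    calc (∑ k ∈ range (n + 1), (z ^ k / (k.factorial : ℂ)) * G (n - k))
        = ∑ k ∈ range (n + 1), ((1 : ℂ) * z ^ k / (k.factorial : ℂ)) *
            ((fub (n - k) : ℂ) * z ^ (n - k) / ((n - k).factorial : ℂ)) := by
          refine Finset.sum_congr rfl fun k _ => ?_
          rw [← h1]
      _ = (∑ k ∈ range (n + 1), (n.choose k : ℂ) * 1 * (fub (n - k) : ℂ)) * z ^ n /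
            (n.factorial : ℂ) := conv_coeff z (fun _ => 1) (fun j => (fub j : ℂ)) n
      _ = 2 * G n - (if n = 0 then 1 else 0) := by
          have hkey := fub_key n
          have hkey' : (∑ k ∈ range (n + 1), (n.choose k : ℂ) * 1 * (fub (n - k) : ℂ)) =
              2 * (fub n : ℂ) - (if n = 0 then 1 else 0) := by
            have : ((∑ k ∈ range (n + 1), n.choose k * fub (n - k) : ℕ) : ℂ) +
                (if n = 0 then 1 else 0) = 2 * (fub n : ℂ) := by
              rcases eq_or_ne n 0 with h | h
              · subst h
                exact_mod_cast congrArg (fun t : ℕ => (t : ℂ)) hkey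
              · simp only [if_neg h] at hkey ⊢
                rw [add_zero] at hkey
                exact_mod_cast congrArg (fun t : ℕ => (t : ℂ)) hkey
            push_cast at this ⊢
            simp only [mul_one]
            linear_combination this
          rw [hkey']
          rcases eq_or_ne n 0 with h | h
          · subst h
            simp [hGdef]
          · simp only [if_neg h]
            rw [sub_zero, sub_zero, hGdef]
            ring
  have hfun : (fun n => ∑ k ∈ range (n + 1), (z ^ k / (k.factorial : ℂ)) * G (n - k)) =
      (fun n => 2 * G n - (if n = 0 then (1 : ℂ) else 0)) := funext hcoeff
  rw [hfun] at hEG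
  have hEG3 : HasSum (fun n => 2 * G n - (if n = 0 then (1 : ℂ) else 0)) (2 * U - 1) :=
    (hG.mul_left 2).sub (hasSum_ite_eq 0 1)
  have hlin : Complex.exp z * U = 2 * U - 1 := hEG.unique hEG3
  -- 2 - exp z is nonzero
  have habs : ‖Complex.exp z‖ < 2 := by
    rw [Complex.norm_exp]
    calc Real.exp z.re ≤ Real.exp ‖z‖ := Real.exp_le_exp.mpr (Complex.re_le_norm z)
      _ < Real.exp (Real.log 2) := Real.exp_lt_exp.mpr hz
      _ = 2 := Real.exp_log two_pos
  have hne : (2 : ℂ) - Complex.exp z ≠ 0 := by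
    intro h
    have he : Complex.exp z = 2 := by linear_combination -h
    rw [he] at habs
    simp at habs
  have hUval : U = (2 - Complex.exp z)⁻¹ := by
    refine eq_inv_of_mul_eq_one_left ?_
    linear_combination -hlin
  -- the series of sbpa 0
  set q : ℂ := (Complex.exp z - 1) / (2 - Complex.exp z) with hqdef
  set A : ℕ → ℂ := fun ℓ => (sbpa 0 ℓ : ℂ) * z ^ ℓ / (ℓ.factorial : ℂ) with hAdef
  have hAG : A = fun ℓ => G ℓ - (if ℓ = 0 then (1 : ℂ) else 0) := by
    funext ℓ
    rcases eq_or_ne ℓ 0 with h | h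
    · subst h
      simp [hAdef, hGdef, sbpa_zero_right, fub_zero]
    · simp only [if_neg h, sub_zero, hAdef, hGdef]
      rw [sbpa_zero_eq_fub ℓ (Nat.pos_of_ne_zero h)]
  have hA : HasSum A q := by
    rw [hAG]
    have h1 : HasSum (fun ℓ => G ℓ - (if ℓ = 0 then (1 : ℂ) else 0)) (U - 1) :=
      hG.sub (hasSum_ite_eq 0 1)
    have h2 : U - 1 = q := by
      rw [hUval, hqdef]
      field_simp
      ring
    rwa [h2] at h1
  have hAnorm : Summable fun ℓ => ‖A ℓ‖ := by
    rw [hAG]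
    have hdel : Summable fun ℓ : ℕ => ‖(if ℓ = 0 then (1 : ℂ) else 0)‖ := by
      refine ((hasSum_ite_eq 0 (1 : ℝ)).summable).congr fun ℓ => ?_
      rcases eq_or_ne ℓ 0 with h | h <;> simp [h]
    refine Summable.of_nonneg_of_le (fun ℓ => norm_nonneg _) (fun ℓ => norm_sub_le _ _)
      (hGnorm.add hdel)
  -- induction on the number of bars
  have main : ∀ M : ℕ,
      Summable (fun ℓ => ‖(sbpa M ℓ : ℂ) * z ^ ℓ / (ℓ.factorial : ℂ)‖) ∧
        HasSum (fun ℓ => (sbpa M ℓ : ℂ) * z ^ ℓ / (ℓ.factorial : ℂ)) (q ^ (M + 1)) := by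
    intro M
    induction M with
    | zero => exact ⟨hAnorm, by simpa [pow_one] using hA⟩
    | succ M ih =>
      obtain ⟨ihn, ihs⟩ := ih
      set SM : ℕ → ℂ := fun ℓ => (sbpa M ℓ : ℂ) * z ^ ℓ / (ℓ.factorial : ℂ) with hSMdef
      have hcoeff2 : ∀ n : ℕ, (∑ k ∈ range (n + 1), SM k * A (n - k)) =
          (sbpa (M + 1) n : ℂ) * z ^ n / (n.factorial : ℂ) := by
        intro n
        have h1 := conv_coeff z (fun j => (sbpa M j : ℂ)) (fun j => (sbpa 0 j : ℂ)) n
        rw [hSMdef, hAdef]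
        rw [h1]
        congr 1
        have h2 : ((sbpa (M + 1) n : ℕ) : ℂ) =
            ∑ k ∈ range (n + 1), (n.choose k : ℂ) * (sbpa M k : ℂ) * (sbpa 0 (n - k) : ℂ) := by
          rw [sbpa_rec M n]
          push_cast
          refine Finset.sum_congr rfl fun k _ => ?_
          ring
        rw [← h2]
      have hprod := hasSum_sum_range_mul_of_summable_norm ihn hAnorm
      rw [ihs.tsum_eq, hA.tsum_eq] at hprod
      have hfun2 : (fun n => ∑ k ∈ range (n + 1), SM k * A (n - k)) =
          (fun n => (sbpa (M + 1) n : ℂ) * z ^ n / (n.factorial : ℂ)) := funext hcoeff2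
      rw [hfun2] at hprod
      refine ⟨?_, ?_⟩
      · have := summable_norm_sum_mul_range_of_summable_norm ihn hAnorm
        refine this.congr fun n => ?_
        rw [hcoeff2 n]
      · have hval : q ^ (M + 1) * q = q ^ (M + 1 + 1) := by
          rw [pow_succ]; ring
        rwa [hval] at hprod
  exact (main m).2
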